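/- Let D ⊂ ℝⁿ be the convex hull of the points {0, e_1, …, e_n}, where e_1, …, e_n is the standard basis of ℝⁿ. Then every vector v ∈ ℝⁿ with ‖v‖ ≤ 1/n can be written as v = p − q with p, q ∈ D. -/

import Mathlib

lemma abs_coord_le (n : ℕ) (v : EuclideanSpace ℝ (Fin n)) (i : Fin n) : |v i| ≤ ‖v‖ := by
  rw [EuclideanSpace.norm_eq, ← Real.sqrt_sq_eq_abs]
  apply Real.sqrt_le_sqrt
  have := Finset.single_le_sum (f := fun j => v j ^ 2) (fun j _ => by positivity)
    (Finset.mem_univ i)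
  simpa [Real.norm_eq_abs, sq_abs] using this

lemma mem_simplex (n : ℕ) (x : EuclideanSpace ℝ (Fin n)) (h0 : ∀ i, 0 ≤ x i)
    (hs : ∑ i, x i ≤ 1) :
    x ∈ convexHull ℝ
      ({0} ∪ Set.range fun i : Fin n => EuclideanSpace.single i (1 : ℝ)) := by
  set S : Set (EuclideanSpace ℝ (Fin n)) :=
    {0} ∪ Set.range fun i : Fin n => EuclideanSpace.single i (1 : ℝ) with hS
  let w : Option (Fin n) → ℝ := fun o => Option.elim o (1 - ∑ i, x i) (fun i => x i)
  let z : Option (Fin n) → EuclideanSpace ℝ (Fin n) :=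
    fun o => Option.elim o 0 (fun i => EuclideanSpace.single i (1 : ℝ))
  have key := (convex_convexHull ℝ S).sum_mem (t := (Finset.univ : Finset (Option (Fin n))))
    (w := w) (z := z)
    (by rintro (_|i) _
        · simpa [w] using hs
        · exact h0 i)
    (by simp [w, Fintype.sum_option])
    (by rintro (_|i) _
        · exact subset_convexHull ℝ S (Or.inl rfl)
        · exact subset_convexHull ℝ S (Or.inr ⟨i, rfl⟩))
  convert key using 1
  ext j
  simp [w, z, Fintype.sum_option, Finset.sum_apply', EuclideanSpace.single_apply, mul_ite,
    Finset.sum_ite_eq]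
  have : ((∑ i, x i • EuclideanSpace.single i (1:ℝ)) : EuclideanSpace ℝ (Fin n)) j
      = ∑ i, x i • (EuclideanSpace.single i (1:ℝ) : EuclideanSpace ℝ (Fin n)) j := by
    induction (Finset.univ : Finset (Fin n)) using Finset.induction with
    | empty => rfl
    | insert a s h ih => rw [Finset.sum_insert h, Finset.sum_insert h, ← ih]; rfl
  simp only [Pi.single_apply]
  simp [EuclideanSpace.single_apply, mul_ite, Finset.sum_ite_eq]

/-- Every vector `v ∈ ℝⁿ` with `‖v‖ ≤ 1/n` is a difference of two
points of the unit simplex `D = conv{0, e₁, …, eₙ}`. -/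
theorem exists_diff_of_unit_simplex (n : ℕ) (v : EuclideanSpace ℝ (Fin n))
    (hv : ‖v‖ ≤ 1 / n) :
    ∃ p ∈ convexHull ℝ
        ({0} ∪ Set.range fun i : Fin n => EuclideanSpace.single i (1 : ℝ)),
      ∃ q ∈ convexHull ℝ
        ({0} ∪ Set.range fun i : Fin n => EuclideanSpace.single i (1 : ℝ)),
        v = p - q := by
  rcases Nat.eq_zero_or_pos n with rfl | hn
  · refine ⟨0, subset_convexHull ℝ _ (Or.inl rfl), 0, subset_convexHull ℝ _ (Or.inl rfl), ?_⟩
    apply Subsingleton.elim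
  have hn' : (0:ℝ) < n := by exact_mod_cast hn
  have habs : ∀ i, |v i| ≤ 1 / n := fun i => (abs_coord_le n v i).trans hv
  set p : EuclideanSpace ℝ (Fin n) := WithLp.toLp 2 (fun i => 1 / (2 * n) + v i / 2) with hp
  set q : EuclideanSpace ℝ (Fin n) := WithLp.toLp 2 (fun i => 1 / (2 * n) - v i / 2) with hq
  have hvle : ∀ i, -(1/n) ≤ v i ∧ v i ≤ 1/n := fun i => abs_le.mp (habs i)
  refine ⟨p, mem_simplex n p (fun i => ?_) ?_, q, mem_simplex n q (fun i => ?_) ?_, ?_⟩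
  · have := (hvle i).1
    have h2 : 1 / (2 * (n:ℝ)) = (1/(n:ℝ))/2 := by ring
    simp only [hp, WithLp.ofLp_toLp]
    linarith
  · have hb : ∀ i ∈ Finset.univ, p i ≤ 1/(2*n) + (1/n)/2 := by
      intro i _
      have := (hvle i).2
      simp only [hp, WithLp.ofLp_toLp]
      linarith
    calc ∑ i, p i ≤ ∑ _i : Fin n, ((1/(2*(n:ℝ)) + (1/(n:ℝ))/2) : ℝ) := Finset.sum_le_sum hb
      _ = (n:ℝ) * (1/(2*(n:ℝ)) + (1/(n:ℝ))/2) := by simp [Finset.sum_const, mul_comm]; ring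
      _ = 1 := by field_simp; ring
  · have := (hvle i).2
    have h2 : 1 / (2 * (n:ℝ)) = (1/(n:ℝ))/2 := by ring
    simp only [hq, WithLp.ofLp_toLp]
    linarith
  · have hb : ∀ i ∈ Finset.univ, q i ≤ 1/(2*n) + (1/n)/2 := by
      intro i _
      have := (hvle i).1
      simp only [hq, WithLp.ofLp_toLp]
      linarith
    calc ∑ i, q i ≤ ∑ _i : Fin n, ((1/(2*(n:ℝ)) + (1/(n:ℝ))/2) : ℝ) := Finset.sum_le_sum hb
      _ = (n:ℝ) * (1/(2*(n:ℝ)) + (1/(n:ℝ))/2) := by simp [Finset.sum_const, mul_comm]; ring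
      _ = 1 := by field_simp; ring
  · ext j
    simp only [PiLp.sub_apply, hp, hq, WithLp.ofLp_toLp]
    ring
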